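/- arXiv:2101.11381 — 2 statements merged into one kernel-verified Lean document; each statement's English description precedes it below -/
import Mathlib

section
/- Under the B-EDD model, the occurrence probability of any motif s factorizes as φ_s = (∏_{u=1}^{p_s} λ_{d_u^s} · ∏_{v=1}^{q_s} μ_{e_v^s}) / ρ^{d_+^s}, where λ_d = ρ^d ∫_0^1 g(u)^d du is the occurrence probability of the top star with d branches and μ_d = ρ^d ∫_0^1 h(v)^d dv is that of the bottom star with d branches, and ρ = λ_1 = μ_1 is the edge probability. -/
open MeasureTheory Finset

theorem lintegral_pi_fin_prod {n : ℕ} (ν : Measure ℝ) [SigmaFinite ν]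
    (f : Fin n → ℝ → ENNReal) (hf : ∀ i, Measurable (f i)) :
    ∫⁻ x : Fin n → ℝ, ∏ i, f i (x i) ∂(Measure.pi fun _ => ν)
      = ∏ i, ∫⁻ x, f i x ∂ν := by
  induction n with
  | zero => simp [Measure.pi_of_empty]
  | succ n ih =>
      calc
        _ = ∫⁻ y : ℝ × (Fin n → ℝ), f 0 y.1 * ∏ i : Fin n, f i.succ (y.2 i)
            ∂(ν.prod (Measure.pi fun _ => ν)) := by
          rw [← (measurePreserving_piFinSuccAbove (fun _ : Fin (n+1) => ν) 0).lintegral_comp]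
          · congr 1
            ext x
            rw [Fin.prod_univ_succ]
            rfl
          · exact Measurable.mul ((hf 0).comp measurable_fst)
              (Finset.measurable_prod _ fun i _ =>
                ((hf i.succ).comp ((measurable_pi_apply i).comp measurable_snd)))
        _ = (∫⁻ x, f 0 x ∂ν) * ∏ i : Fin n, ∫⁻ x, f i.succ x ∂ν := by
          rw [lintegral_prod_mul (f := f 0) (g := fun w : Fin n → ℝ => ∏ i : Fin n, f i.succ (w i)) (hf 0).aemeasurable
            (Finset.measurable_prod _ fun i _ =>
              ((hf i.succ).comp (measurable_pi_apply i))).aemeasurable,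
            ih (fun i => f i.succ) (fun i => hf i.succ)]
        _ = _ := by rw [Fin.prod_univ_succ fun i : Fin (n+1) => ∫⁻ x, f i x ∂ν]

theorem prod_ite_factor {p q : ℕ} (A : Fin p → Fin q → Bool) (ρ : ℝ)
    (a : Fin p → ℝ) (b : Fin q → ℝ) :
    ∏ ij : Fin p × Fin q, (if A ij.1 ij.2 then ρ * a ij.1 * b ij.2 else 1)
      = ρ ^ (∑ i, (univ.filter fun j => A i j = true).card)
        * (∏ i, a i ^ (univ.filter fun j => A i j = true).card)
        * ∏ j, b j ^ (univ.filter fun i => A i j = true).card := by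
  have split : ∀ ij : Fin p × Fin q,
      (if A ij.1 ij.2 then ρ * a ij.1 * b ij.2 else 1)
        = ((if A ij.1 ij.2 then ρ else 1) * (if A ij.1 ij.2 then a ij.1 else 1))
          * (if A ij.1 ij.2 then b ij.2 else 1) := by
    intro ij; by_cases hA : A ij.1 ij.2 <;> simp [hA]
  simp_rw [split, Finset.prod_mul_distrib]
  congr 1
  · congr 1
    · rw [Fintype.prod_prod_type]
      have : ∀ i : Fin p, (∏ j, if A i j then ρ else 1)
          = ρ ^ (univ.filter fun j => A i j = true).card := by
        intro i
        simp [Finset.prod_ite, Finset.prod_const]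
      rw [Finset.prod_congr rfl fun i _ => this i, Finset.prod_pow_eq_pow_sum]
    · rw [Fintype.prod_prod_type]
      refine Finset.prod_congr rfl fun i _ => ?_
      simp [Finset.prod_ite, Finset.prod_const]
  · rw [Fintype.prod_prod_type_right]
    refine Finset.prod_congr rfl fun j _ => ?_
    simp [Finset.prod_ite, Finset.prod_const]

/-- Under the B-EDD model, the occurrence probability of any motif `s`
factorizes as `φ_s = (∏_u λ_{d_u} ∏_v μ_{e_v}) / ρ^{d_+}`, where
`λ_d = ρ^d ∫ g^d` (top-star probability) and `μ_d = ρ^d ∫ h^d` (bottom-star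
probability), and `ρ` is the edge probability. -/
theorem motif_probability_star_factorization
    (p q : ℕ) (A : Fin p → Fin q → Bool)
    (ρ : ℝ) (g h : ℝ → ℝ)
    (hgm : Measurable g) (hhm : Measurable h)
    (hg0 : ∀ u, 0 ≤ g u) (hh0 : ∀ v, 0 ≤ h v)
    (hgint : ∫ u in Set.Icc (0:ℝ) 1, g u = 1)
    (hhint : ∫ v in Set.Icc (0:ℝ) 1, h v = 1)
    (hρ : 0 < ρ)
    (hbound : ∀ u ∈ Set.Icc (0:ℝ) 1, ∀ v ∈ Set.Icc (0:ℝ) 1, ρ * g u * h v ≤ 1)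
    (μ : Measure ((Fin p → ℝ) × (Fin q → ℝ) × (Fin p × Fin q → ℝ)))
    (hμ : μ = (Measure.pi fun _ : Fin p => volume.restrict (Set.Icc (0:ℝ) 1)).prod
        ((Measure.pi fun _ : Fin q => volume.restrict (Set.Icc (0:ℝ) 1)).prod
          (Measure.pi fun _ : Fin p × Fin q => volume.restrict (Set.Icc (0:ℝ) 1))))
    (d : Fin p → ℕ) (e : Fin q → ℕ) (dplus : ℕ)
    (hd : ∀ i, d i = (univ.filter fun j => A i j = true).card)
    (he : ∀ j, e j = (univ.filter fun i => A i j = true).card)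
    (hdplus : dplus = ∑ i, d i)
    (lam mu : ℕ → ℝ)
    (hlam : ∀ k, lam k = ρ ^ k * ∫ u in Set.Icc (0:ℝ) 1, g u ^ k)
    (hmu : ∀ k, mu k = ρ ^ k * ∫ v in Set.Icc (0:ℝ) 1, h v ^ k) :
    (μ {ω | ∀ i j, A i j = true →
        ω.2.2 (i, j) ≤ ρ * g (ω.1 i) * h (ω.2.1 j)}).toReal
      = ((∏ i, lam (d i)) * (∏ j, mu (e j))) / ρ ^ dplus := by
  subst hμ
  set I : Set ℝ := Set.Icc (0:ℝ) 1 with hI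
  set ν : Measure ℝ := volume.restrict I with hν
  have hνuniv : ν Set.univ = 1 := by
    simp [hν, hI, Real.volume_Icc]
  haveI : IsProbabilityMeasure ν := ⟨hνuniv⟩
  have hνI : ν I = 1 := by
    rw [hν, Measure.restrict_apply_self]
    simp [hI, Real.volume_Icc]
  -- a point with positive h
  have hv0 : ∃ v ∈ I, 0 < h v := by
    by_contra hc
    push_neg at hc
    have hz : ∀ v ∈ I, h v = 0 := fun v hv => le_antisymm (hc v hv) (hh0 v)
    have : ∫ v in I, h v = 0 := by
      rw [setIntegral_congr_fun measurableSet_Icc hz]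
      simp
    rw [this] at hhint
    norm_num at hhint
  obtain ⟨v0, hv0I, hv0pos⟩ := hv0
  have hu0 : ∃ u ∈ I, 0 < g u := by
    by_contra hc
    push_neg at hc
    have hz : ∀ u ∈ I, g u = 0 := fun u hu => le_antisymm (hc u hu) (hg0 u)
    have : ∫ u in I, g u = 0 := by
      rw [setIntegral_congr_fun measurableSet_Icc hz]
      simp
    rw [this] at hgint
    norm_num at hgint
  obtain ⟨u0, hu0I, hu0pos⟩ := hu0
  have hgbd : ∀ u ∈ I, g u ≤ 1 / (ρ * h v0) := by
    intro u hu
    rw [le_div_iff₀ (mul_pos hρ hv0pos)]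
    nlinarith [hbound u hu v0 hv0I]
  have hhbd : ∀ v ∈ I, h v ≤ 1 / (ρ * g u0) := by
    intro v hv
    rw [le_div_iff₀ (mul_pos hρ hu0pos)]
    nlinarith [hbound u0 hu0I v hv]
  -- integrability
  have hInt_g : ∀ k : ℕ, Integrable (fun x => g x ^ k) ν := by
    intro k
    refine Integrable.mono' (integrable_const ((1 / (ρ * h v0)) ^ k))
      ((hgm.pow_const k).aestronglyMeasurable) ?_
    rw [hν]
    refine (ae_restrict_iff' measurableSet_Icc).2 (ae_of_all _ fun x hx => ?_)
    rw [Real.norm_eq_abs, abs_of_nonneg (pow_nonneg (hg0 x) k)]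
    exact pow_le_pow_left₀ (hg0 x) (hgbd x hx) k
  have hInt_h : ∀ k : ℕ, Integrable (fun x => h x ^ k) ν := by
    intro k
    refine Integrable.mono' (integrable_const ((1 / (ρ * g u0)) ^ k))
      ((hhm.pow_const k).aestronglyMeasurable) ?_
    rw [hν]
    refine (ae_restrict_iff' measurableSet_Icc).2 (ae_of_all _ fun x hx => ?_)
    rw [Real.norm_eq_abs, abs_of_nonneg (pow_nonneg (hh0 x) k)]
    exact pow_le_pow_left₀ (hh0 x) (hhbd x hx) k
  have hLg : ∀ k : ℕ, ∫⁻ x, ENNReal.ofReal (g x ^ k) ∂ν = ENNReal.ofReal (∫ x, g x ^ k ∂ν) :=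
    fun k => (ofReal_integral_eq_lintegral_ofReal (hInt_g k)
      (ae_of_all _ fun x => pow_nonneg (hg0 x) k)).symm
  have hLh : ∀ k : ℕ, ∫⁻ x, ENNReal.ofReal (h x ^ k) ∂ν = ENNReal.ofReal (∫ x, h x ^ k ∂ν) :=
    fun k => (ofReal_integral_eq_lintegral_ofReal (hInt_h k)
      (ae_of_all _ fun x => pow_nonneg (hh0 x) k)).symm
  have hig : ∀ k : ℕ, 0 ≤ ∫ x, g x ^ k ∂ν :=
    fun k => integral_nonneg fun x => pow_nonneg (hg0 x) k
  have hih : ∀ k : ℕ, 0 ≤ ∫ x, h x ^ k ∂ν :=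
    fun k => integral_nonneg fun x => pow_nonneg (hh0 x) k
  -- a.e. coordinates in I
  have hae_pi : ∀ (n : ℕ), ∀ᵐ x : Fin n → ℝ ∂(Measure.pi fun _ : Fin n => ν), ∀ i, x i ∈ I := by
    intro n
    rw [ae_iff]
    have hs : {x : Fin n → ℝ | ¬ ∀ i, x i ∈ I} = (Set.pi Set.univ fun _ : Fin n => I)ᶜ := by
      ext x
      simp only [Set.mem_setOf_eq, Set.mem_compl_iff, Set.mem_pi, Set.mem_univ, true_implies]
    rw [hs, measure_compl (MeasurableSet.univ_pi fun _ => measurableSet_Icc)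
      (measure_ne_top _ _), Measure.pi_pi]
    simp [hνI, show ν (Set.Icc 0 1) = 1 from hνI]
  -- measurability of the motif event
  set S : Set ((Fin p → ℝ) × (Fin q → ℝ) × (Fin p × Fin q → ℝ)) :=
    {ω | ∀ i j, A i j = true → ω.2.2 (i, j) ≤ ρ * g (ω.1 i) * h (ω.2.1 j)} with hS
  have hSm : MeasurableSet S := by
    have : S = ⋂ (i) (j) (_ : A i j = true),
        {ω : (Fin p → ℝ) × (Fin q → ℝ) × (Fin p × Fin q → ℝ) |
          ω.2.2 (i, j) ≤ ρ * g (ω.1 i) * h (ω.2.1 j)} := by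
      ext ω; simp [hS, Set.mem_iInter]
    rw [this]
    refine MeasurableSet.iInter fun i => MeasurableSet.iInter fun j =>
      MeasurableSet.iInter fun _ => ?_
    refine measurableSet_le ?_ ?_ <;> fun_prop
  -- section computation for the W coordinates
  have hIic : ∀ c : ℝ, 0 ≤ c → c ≤ 1 → ν (Set.Iic c) = ENNReal.ofReal c := by
    intro c hc0 hc1
    rw [hν, Measure.restrict_apply measurableSet_Iic]
    have : Set.Iic c ∩ I = Set.Icc 0 c := by
      ext x
      simp only [Set.mem_inter_iff, Set.mem_Iic, hI, Set.mem_Icc]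
      constructor
      · rintro ⟨h1, h2, h3⟩; exact ⟨h2, h1⟩
      · rintro ⟨h1, h2⟩; exact ⟨h2, h1, h2.trans hc1⟩
    rw [this, Real.volume_Icc, sub_zero]
  have hsec : ∀ (u : Fin p → ℝ) (v : Fin q → ℝ), (∀ i, u i ∈ I) → (∀ j, v j ∈ I) →
      (Measure.pi fun _ : Fin p × Fin q => ν)
        {w : Fin p × Fin q → ℝ | ∀ i j, A i j = true → w (i, j) ≤ ρ * g (u i) * h (v j)}
      = ENNReal.ofReal (ρ ^ dplus * (∏ i, g (u i) ^ d i) * ∏ j, h (v j) ^ e j) := by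
    intro u v hu hv
    have hset : {w : Fin p × Fin q → ℝ | ∀ i j, A i j = true → w (i, j) ≤ ρ * g (u i) * h (v j)}
        = Set.pi Set.univ (fun ij : Fin p × Fin q =>
            if A ij.1 ij.2 then Set.Iic (ρ * g (u ij.1) * h (v ij.2)) else Set.univ) := by
      ext w
      simp only [Set.mem_setOf_eq, Set.mem_pi, Set.mem_univ, true_imp_iff]
      constructor
      · intro hw ij
        by_cases hA : A ij.1 ij.2 <;> simp [hA, hw ij.1 ij.2]
      · intro hw i j hA
        have := hw (i, j)
        simpa [hA] using this
    rw [hset, Measure.pi_pi]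
    have hfac : ∀ ij : Fin p × Fin q,
        ν (if A ij.1 ij.2 then Set.Iic (ρ * g (u ij.1) * h (v ij.2)) else Set.univ)
          = ENNReal.ofReal (if A ij.1 ij.2 then ρ * g (u ij.1) * h (v ij.2) else 1) := by
      intro ij
      by_cases hA : A ij.1 ij.2
      · simp only [hA, if_true]
        exact hIic _ (mul_nonneg (mul_nonneg hρ.le (hg0 _)) (hh0 _)) (hbound (u ij.1) (hu ij.1) (v ij.2) (hv ij.2))
      · simp [hA, hνuniv]
    rw [Finset.prod_congr rfl fun ij _ => hfac ij,
      ← ENNReal.ofReal_prod_of_nonneg (fun ij _ => by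
        by_cases hA : A ij.1 ij.2 <;> simp only [hA, if_true, if_false]
        · exact mul_nonneg (mul_nonneg hρ.le (hg0 _)) (hh0 _)
        · exact zero_le_one)]
    congr 1
    have := prod_ite_factor A ρ (fun i => g (u i)) (fun j => h (v j))
    simp only [hd, he, hdplus]
    exact this
  -- step 1: the inner double integral
  have hstep1 : ∀ u : Fin p → ℝ, (∀ i, u i ∈ I) →
      ((Measure.pi fun _ : Fin q => ν).prod (Measure.pi fun _ : Fin p × Fin q => ν))
        (Prod.mk u ⁻¹' S)
      = ENNReal.ofReal (ρ ^ dplus * ∏ i, g (u i) ^ d i)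
          * ENNReal.ofReal (∏ j, ∫ x, h x ^ e j ∂ν) := by
    intro u hu
    rw [Measure.prod_apply (measurable_prodMk_left hSm)]
    have hae : ∀ᵐ v : Fin q → ℝ ∂(Measure.pi fun _ : Fin q => ν),
        (Measure.pi fun _ : Fin p × Fin q => ν) (Prod.mk v ⁻¹' (Prod.mk u ⁻¹' S))
          = ENNReal.ofReal (ρ ^ dplus * ∏ i, g (u i) ^ d i)
            * ∏ j, ENNReal.ofReal (h (v j) ^ e j) := by
      filter_upwards [hae_pi q] with v hv
      have hpre : Prod.mk v ⁻¹' (Prod.mk u ⁻¹' S)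
          = {w : Fin p × Fin q → ℝ | ∀ i j, A i j = true → w (i, j) ≤ ρ * g (u i) * h (v j)} := rfl
      rw [hpre, hsec u v hu hv,
        ENNReal.ofReal_mul (mul_nonneg (pow_nonneg hρ.le _)
          (Finset.prod_nonneg fun i _ => pow_nonneg (hg0 _) _)),
        ENNReal.ofReal_prod_of_nonneg (fun j _ => pow_nonneg (hh0 _) _)]
    rw [lintegral_congr_ae hae,
      lintegral_const_mul' _ _ ENNReal.ofReal_ne_top,
      lintegral_pi_fin_prod ν _ (fun j => (hhm.pow_const (e j)).ennreal_ofReal)]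
    congr 1
    rw [Finset.prod_congr rfl fun j _ => hLh (e j),
      ← ENNReal.ofReal_prod_of_nonneg (fun j _ => hih (e j))]
  -- main computation
  rw [Measure.prod_apply hSm]
  have hmain : ∫⁻ u, ((Measure.pi fun _ : Fin q => ν).prod
        (Measure.pi fun _ : Fin p × Fin q => ν)) (Prod.mk u ⁻¹' S)
        ∂(Measure.pi fun _ : Fin p => ν)
      = ENNReal.ofReal (ρ ^ dplus) * ENNReal.ofReal (∏ i, ∫ x, g x ^ d i ∂ν)
          * ENNReal.ofReal (∏ j, ∫ x, h x ^ e j ∂ν) := by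
    rw [lintegral_congr_ae ((hae_pi p).mono fun u hu => hstep1 u hu),
      lintegral_mul_const' _ _ ENNReal.ofReal_ne_top]
    congr 1
    have hpt : ∀ u : Fin p → ℝ, ENNReal.ofReal (ρ ^ dplus * ∏ i, g (u i) ^ d i)
        = ENNReal.ofReal (ρ ^ dplus) * ∏ i, ENNReal.ofReal (g (u i) ^ d i) := by
      intro u
      rw [ENNReal.ofReal_mul (pow_nonneg hρ.le _),
        ENNReal.ofReal_prod_of_nonneg (fun i _ => pow_nonneg (hg0 _) _)]
    rw [lintegral_congr hpt,
      lintegral_const_mul' _ _ ENNReal.ofReal_ne_top,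
      lintegral_pi_fin_prod ν _ (fun i => (hgm.pow_const (d i)).ennreal_ofReal)]
    congr 1
    rw [Finset.prod_congr rfl fun i _ => hLg (d i),
      ← ENNReal.ofReal_prod_of_nonneg (fun i _ => hig (d i))]
  rw [hmain]
  have hsum : ∑ j, e j = dplus := by
    rw [hdplus]
    simp only [hd, he, Finset.card_filter]
    exact Finset.sum_comm
  rw [ENNReal.toReal_mul, ENNReal.toReal_mul,
    ENNReal.toReal_ofReal (pow_nonneg hρ.le _),
    ENNReal.toReal_ofReal (Finset.prod_nonneg fun i _ => hig (d i)),
    ENNReal.toReal_ofReal (Finset.prod_nonneg fun j _ => hih (e j))]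
  simp only [hlam, hmu]
  rw [Finset.prod_mul_distrib, Finset.prod_mul_distrib,
    Finset.prod_pow_eq_pow_sum, Finset.prod_pow_eq_pow_sum, hsum, ← hdplus]
  have hρd : (ρ : ℝ) ^ dplus ≠ 0 := pow_ne_zero _ (ne_of_gt hρ)
  field_simp
end

section
/- For the 4-cycle motif (motif 6, the complete bipartite 2×2 motif), the B-EDD occurrence probability equals φ_6 = ρ⁴ (∫_0^1 g(u)² du)² (∫_0^1 h(v)² dv)² = γ_2² λ_2² / ρ⁴, and moreover φ_6 ≥ φ_5² / φ_1² (an instance of the product formula combined with the Cauchy–Schwarz facts ∫g² ≥ 1, ∫h² ≥ 1). -/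
open MeasureTheory Set ENNReal

noncomputable abbrev cmpM : Measure ℝ := volume.restrict (Set.Icc (0:ℝ) 1)

lemma cmp_isProb : IsProbabilityMeasure cmpM :=
  ⟨by rw [Measure.restrict_apply_univ, Real.volume_Icc]; norm_num⟩

lemma cmp_Icc : cmpM (Set.Icc (0:ℝ) 1) = 1 := by
  rw [Measure.restrict_apply measurableSet_Icc, Set.inter_self, Real.volume_Icc]; norm_num

lemma cmp_Iic' {c : ℝ} (h0 : 0 ≤ c) (h1 : c ≤ 1) :
    volume (Set.Iic c ∩ Set.Icc (0:ℝ) 1) = ENNReal.ofReal c := by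
  have : Set.Iic c ∩ Set.Icc (0:ℝ) 1 = Set.Icc 0 c := by
    ext x
    simp only [Set.mem_inter_iff, Set.mem_Iic, Set.mem_Icc]
    exact ⟨fun ⟨hc, h0x, _⟩ => ⟨h0x, hc⟩, fun ⟨h0x, hc⟩ => ⟨hc, h0x, hc.trans h1⟩⟩
  rw [this, Real.volume_Icc, sub_zero]

lemma cmp_Iic {c : ℝ} (h0 : 0 ≤ c) (h1 : c ≤ 1) : cmpM (Set.Iic c) = ENNReal.ofReal c := by
  rw [Measure.restrict_apply measurableSet_Iic, cmp_Iic' h0 h1]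

lemma cmp_ae_pi {ι : Type} [Fintype ι] :
    ∀ᵐ u ∂(Measure.pi fun _ : ι => cmpM), ∀ i, u i ∈ Set.Icc (0:ℝ) 1 := by
  haveI := cmp_isProb
  have h1 : (Measure.pi fun _ : ι => cmpM) (Set.pi Set.univ fun _ => Set.Icc (0:ℝ) 1) = 1 := by
    rw [Measure.pi_pi]
    simp [cmp_Icc]
  rw [ae_iff]
  have hset : {u : ι → ℝ | ¬ ∀ i, u i ∈ Set.Icc (0:ℝ) 1}
      = (Set.pi Set.univ fun _ => Set.Icc (0:ℝ) 1)ᶜ := by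
    ext u
    simp only [Set.mem_compl_iff, Set.mem_pi, Set.mem_univ, true_implies, Set.mem_setOf_eq]
  rw [hset, measure_compl (MeasurableSet.univ_pi fun _ => measurableSet_Icc)
    (measure_ne_top _ _), h1, measure_univ, tsub_self]

lemma cmp_lintegral_pi_two (f₀ f₁ : ℝ → ℝ≥0∞) (hf₀ : Measurable f₀) (hf₁ : Measurable f₁) :
    ∫⁻ x, f₀ (x 0) * f₁ (x 1) ∂(Measure.pi fun _ : Fin 2 => cmpM)
      = (∫⁻ y, f₀ y ∂cmpM) * ∫⁻ y, f₁ y ∂cmpM := by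
  have hmp := measurePreserving_piFinTwo (fun _ : Fin 2 => cmpM)
  have h2 := hmp.lintegral_comp (f := fun p : ℝ × ℝ => f₀ p.1 * f₁ p.2)
    ((hf₀.comp measurable_fst).mul (hf₁.comp measurable_snd))
  simp only [MeasurableEquiv.piFinTwo_apply] at h2
  exact h2.trans (lintegral_prod_mul hf₀.aemeasurable hf₁.aemeasurable)

lemma cmp_sec6 (ρ : ℝ) (g h : ℝ → ℝ) (u v : Fin 2 → ℝ)
    (hc0 : ∀ i j : Fin 2, 0 ≤ ρ * g (u i) * h (v j))
    (hc1 : ∀ i j : Fin 2, ρ * g (u i) * h (v j) ≤ 1) :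
    (Measure.pi fun _ : Fin 2 × Fin 2 => cmpM)
      {w | ∀ i j : Fin 2, w (i, j) ≤ ρ * g (u i) * h (v j)}
      = ENNReal.ofReal (ρ * g (u 0) * h (v 0)) * ENNReal.ofReal (ρ * g (u 0) * h (v 1))
        * ENNReal.ofReal (ρ * g (u 1) * h (v 0)) * ENNReal.ofReal (ρ * g (u 1) * h (v 1)) := by
  have hs : {w : Fin 2 × Fin 2 → ℝ | ∀ i j : Fin 2, w (i, j) ≤ ρ * g (u i) * h (v j)}
      = Set.pi Set.univ fun ij => Set.Iic (ρ * g (u ij.1) * h (v ij.2)) := by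
    ext w
    simp only [Set.mem_setOf_eq, Set.mem_pi, Set.mem_univ, true_implies, Set.mem_Iic, Prod.forall]
  rw [hs, Measure.pi_pi, Fintype.prod_prod_type]
  simp only [Fin.prod_univ_two]
  rw [cmp_Iic (hc0 0 0) (hc1 0 0), cmp_Iic (hc0 0 1) (hc1 0 1),
    cmp_Iic (hc0 1 0) (hc1 1 0), cmp_Iic (hc0 1 1) (hc1 1 1)]
  ring

lemma cmp_sec5 (a b d : ℝ) (ha0 : 0 ≤ a) (ha1 : a ≤ 1) (hb0 : 0 ≤ b) (hb1 : b ≤ 1)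
    (hd0 : 0 ≤ d) (hd1 : d ≤ 1) :
    (Measure.pi fun _ : Fin 2 × Fin 2 => cmpM)
      {w | w (0, 0) ≤ a ∧ w (0, 1) ≤ b ∧ w (1, 1) ≤ d}
      = ENNReal.ofReal a * ENNReal.ofReal b * ENNReal.ofReal d := by
  haveI := cmp_isProb
  classical
  have hs : {w : Fin 2 × Fin 2 → ℝ | w (0, 0) ≤ a ∧ w (0, 1) ≤ b ∧ w (1, 1) ≤ d}
      = Set.pi Set.univ fun ij =>
          if ij.1 = 0 then (if ij.2 = 0 then Set.Iic a else Set.Iic b)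
          else (if ij.2 = 0 then Set.univ else Set.Iic d) := by
    ext w
    simp only [Set.mem_setOf_eq, Set.mem_pi, Set.mem_univ, true_implies]
    constructor
    · rintro ⟨h1, h2, h3⟩ ij
      fin_cases ij <;> simp_all
    · intro hw
      have h1 := hw (0, 0)
      have h2 := hw (0, 1)
      have h3 := hw (1, 1)
      norm_num at h1 h2 h3
      exact ⟨h1, h2, h3⟩
  rw [hs, Measure.pi_pi, Fintype.prod_prod_type]
  simp only [Fin.prod_univ_two]
  norm_num
  rw [cmp_Iic' ha0 ha1, cmp_Iic' hb0 hb1, cmp_Iic' hd0 hd1]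

/-- for the 4-cycle motif (motif 6, complete bipartite 2×2),
`φ_6 = ρ⁴ (∫ g²)² (∫ h²)² = γ₂² λ₂² / ρ⁴`, and moreover `φ_6 ≥ φ_5² / φ_1²`
where motif 5 is the path and `φ_1 = ρ` is the edge probability. -/
theorem cycle_motif_probability
    (ρ : ℝ) (g h : ℝ → ℝ)
    (hgm : Measurable g) (hhm : Measurable h)
    (hg0 : ∀ u, 0 ≤ g u) (hh0 : ∀ v, 0 ≤ h v)
    (hgint : ∫ u in Set.Icc (0:ℝ) 1, g u = 1)
    (hhint : ∫ v in Set.Icc (0:ℝ) 1, h v = 1)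
    (hρ : 0 < ρ)
    (hbound : ∀ u ∈ Set.Icc (0:ℝ) 1, ∀ v ∈ Set.Icc (0:ℝ) 1, ρ * g u * h v ≤ 1)
    (μ : Measure ((Fin 2 → ℝ) × (Fin 2 → ℝ) × (Fin 2 × Fin 2 → ℝ)))
    (hμ : μ = (Measure.pi fun _ : Fin 2 => volume.restrict (Set.Icc (0:ℝ) 1)).prod
        ((Measure.pi fun _ : Fin 2 => volume.restrict (Set.Icc (0:ℝ) 1)).prod
          (Measure.pi fun _ : Fin 2 × Fin 2 => volume.restrict (Set.Icc (0:ℝ) 1))))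
    (E6 E5 : Set ((Fin 2 → ℝ) × (Fin 2 → ℝ) × (Fin 2 × Fin 2 → ℝ)))
    (hE6 : E6 = {ω | ∀ i j : Fin 2, ω.2.2 (i, j) ≤ ρ * g (ω.1 i) * h (ω.2.1 j)})
    (hE5 : E5 = {ω | ω.2.2 (0, 0) ≤ ρ * g (ω.1 0) * h (ω.2.1 0)
        ∧ ω.2.2 (0, 1) ≤ ρ * g (ω.1 0) * h (ω.2.1 1)
        ∧ ω.2.2 (1, 1) ≤ ρ * g (ω.1 1) * h (ω.2.1 1)}) :
    (μ E6).toReal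
      = ρ ^ 4 * (∫ u in Set.Icc (0:ℝ) 1, g u ^ 2) ^ 2
          * (∫ v in Set.Icc (0:ℝ) 1, h v ^ 2) ^ 2
    ∧ (μ E5).toReal ^ 2 / ρ ^ 2 ≤ (μ E6).toReal := by
  classical
  haveI := cmp_isProb
  -- positive points
  have hex : ∀ (f : ℝ → ℝ), Measurable f → (∀ x, 0 ≤ f x) →
      (∫ x in Set.Icc (0:ℝ) 1, f x) = 1 → ∃ x ∈ Set.Icc (0:ℝ) 1, 0 < f x := by
    intro f hfm hf0 hfi
    by_contra hcon
    push_neg at hcon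
    have hz : Set.EqOn f (fun _ => 0) (Set.Icc (0:ℝ) 1) :=
      fun x hx => le_antisymm (hcon x hx) (hf0 x)
    have h0 : (∫ x in Set.Icc (0:ℝ) 1, f x) = 0 := by
      rw [setIntegral_congr_fun measurableSet_Icc hz]; simp
    rw [hfi] at h0; norm_num at h0
  obtain ⟨v0, hv0m, hv0⟩ := hex h hhm hh0 hhint
  obtain ⟨u0, hu0m, hu0⟩ := hex g hgm hg0 hgint
  have hgC : ∀ u ∈ Set.Icc (0:ℝ) 1, g u ≤ 1 / (ρ * h v0) := fun u hu => by
    rw [le_div_iff₀ (by positivity)]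
    calc g u * (ρ * h v0) = ρ * g u * h v0 := by ring
      _ ≤ 1 := hbound u hu v0 hv0m
  have hhC : ∀ v ∈ Set.Icc (0:ℝ) 1, h v ≤ 1 / (ρ * g u0) := fun v hv => by
    rw [le_div_iff₀ (by positivity)]
    calc h v * (ρ * g u0) = ρ * g u0 * h v := by ring
      _ ≤ 1 := hbound u0 hu0m v hv
  -- integrability
  have hmem : ∀ᵐ x ∂cmpM, x ∈ Set.Icc (0:ℝ) 1 := ae_restrict_mem measurableSet_Icc
  have hint2 : ∀ (f : ℝ → ℝ) (C : ℝ), Measurable f → (∀ x, 0 ≤ f x) →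
      (∀ x ∈ Set.Icc (0:ℝ) 1, f x ≤ C) → Integrable f cmpM := by
    intro f C hfm hf0 hfC
    refine Integrable.mono' (integrable_const C) hfm.aestronglyMeasurable ?_
    exact hmem.mono fun x hx => by
      rw [Real.norm_eq_abs, abs_of_nonneg (hf0 x)]; exact hfC x hx
  have hgInt : Integrable g cmpM := hint2 g _ hgm hg0 hgC
  have hhInt : Integrable h cmpM := hint2 h _ hhm hh0 hhC
  have hg2Int : Integrable (fun x => g x ^ 2) cmpM :=
    hint2 _ ((1 / (ρ * h v0)) ^ 2) (hgm.pow_const 2) (fun x => by positivity)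
      (fun x hx => pow_le_pow_left₀ (hg0 x) (hgC x hx) 2)
  have hh2Int : Integrable (fun x => h x ^ 2) cmpM :=
    hint2 _ ((1 / (ρ * g u0)) ^ 2) (hhm.pow_const 2) (fun x => by positivity)
      (fun x hx => pow_le_pow_left₀ (hh0 x) (hhC x hx) 2)
  -- integral values
  set Ig := ∫ x in Set.Icc (0:ℝ) 1, g x ^ 2 with hIg
  set Ih := ∫ x in Set.Icc (0:ℝ) 1, h x ^ 2 with hIh
  have hIg0 : 0 ≤ Ig := by
    rw [hIg]; exact integral_nonneg fun x => by positivity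
  have hIh0 : 0 ≤ Ih := by
    rw [hIh]; exact integral_nonneg fun x => by positivity
  have hGsq : ∫⁻ x, ENNReal.ofReal (g x ^ 2) ∂cmpM = ENNReal.ofReal Ig := by
    rw [hIg]
    exact (ofReal_integral_eq_lintegral_ofReal hg2Int (ae_of_all _ fun x => by positivity)).symm
  have hHsq : ∫⁻ x, ENNReal.ofReal (h x ^ 2) ∂cmpM = ENNReal.ofReal Ih := by
    rw [hIh]
    exact (ofReal_integral_eq_lintegral_ofReal hh2Int (ae_of_all _ fun x => by positivity)).symm
  have hG1 : ∫⁻ x, ENNReal.ofReal (g x) ∂cmpM = 1 := by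
    have h1 := (ofReal_integral_eq_lintegral_ofReal hgInt (ae_of_all _ fun x => hg0 x)).symm
    rw [h1]
    have h2 : (∫ x, g x ∂cmpM) = 1 := hgint
    rw [h2, ENNReal.ofReal_one]
  have hH1 : ∫⁻ x, ENNReal.ofReal (h x) ∂cmpM = 1 := by
    have h1 := (ofReal_integral_eq_lintegral_ofReal hhInt (ae_of_all _ fun x => hh0 x)).symm
    rw [h1]
    have h2 : (∫ x, h x ∂cmpM) = 1 := hhint
    rw [h2, ENNReal.ofReal_one]
  have hc0 : ∀ (x y : ℝ), (0:ℝ) ≤ ρ * g x * h y := fun x y =>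
    mul_nonneg (mul_nonneg hρ.le (hg0 x)) (hh0 y)
  -- measurability of the events
  have hmE6 : MeasurableSet {ω : (Fin 2 → ℝ) × (Fin 2 → ℝ) × (Fin 2 × Fin 2 → ℝ) |
      ∀ i j : Fin 2, ω.2.2 (i, j) ≤ ρ * g (ω.1 i) * h (ω.2.1 j)} := by
    have hs : {ω : (Fin 2 → ℝ) × (Fin 2 → ℝ) × (Fin 2 × Fin 2 → ℝ) |
        ∀ i j : Fin 2, ω.2.2 (i, j) ≤ ρ * g (ω.1 i) * h (ω.2.1 j)}
        = ⋂ (i : Fin 2) (j : Fin 2), {ω : (Fin 2 → ℝ) × (Fin 2 → ℝ) × (Fin 2 × Fin 2 → ℝ) |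
            ω.2.2 (i, j) ≤ ρ * g (ω.1 i) * h (ω.2.1 j)} := by
      ext ω; simp only [Set.mem_setOf_eq, Set.mem_iInter]
    rw [hs]
    refine MeasurableSet.iInter fun i => MeasurableSet.iInter fun j => ?_
    exact measurableSet_le (measurable_snd.snd.eval)
      ((measurable_const.mul (hgm.comp' measurable_fst.eval)).mul
        (hhm.comp' measurable_snd.fst.eval))
  have hmE5 : MeasurableSet {ω : (Fin 2 → ℝ) × (Fin 2 → ℝ) × (Fin 2 × Fin 2 → ℝ) |
      ω.2.2 (0, 0) ≤ ρ * g (ω.1 0) * h (ω.2.1 0)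
        ∧ ω.2.2 (0, 1) ≤ ρ * g (ω.1 0) * h (ω.2.1 1)
        ∧ ω.2.2 (1, 1) ≤ ρ * g (ω.1 1) * h (ω.2.1 1)} := by
    have hone : ∀ (i j : Fin 2), MeasurableSet {ω : (Fin 2 → ℝ) × (Fin 2 → ℝ) × (Fin 2 × Fin 2 → ℝ) |
        ω.2.2 (i, j) ≤ ρ * g (ω.1 i) * h (ω.2.1 j)} := fun i j =>
      measurableSet_le (measurable_snd.snd.eval)
        ((measurable_const.mul (hgm.comp' measurable_fst.eval)).mul
          (hhm.comp' measurable_snd.fst.eval))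
    exact (hone 0 0).inter ((hone 0 1).inter (hone 1 1))
  -- Fubini for E6
  have h6 : μ E6 = ∫⁻ u, (∫⁻ v, (Measure.pi fun _ : Fin 2 × Fin 2 => cmpM)
      {w | ∀ i j : Fin 2, w (i, j) ≤ ρ * g (u i) * h (v j)}
        ∂(Measure.pi fun _ : Fin 2 => cmpM)) ∂(Measure.pi fun _ : Fin 2 => cmpM) := by
    rw [hμ, hE6, Measure.prod_apply hmE6]
    refine lintegral_congr fun u => ?_
    rw [Measure.prod_apply (hmE6.preimage measurable_prodMk_left)]
    rfl
  -- Fubini for E5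
  have h5 : μ E5 = ∫⁻ u, (∫⁻ v, (Measure.pi fun _ : Fin 2 × Fin 2 => cmpM)
      {w | w (0, 0) ≤ ρ * g (u 0) * h (v 0) ∧ w (0, 1) ≤ ρ * g (u 0) * h (v 1)
        ∧ w (1, 1) ≤ ρ * g (u 1) * h (v 1)}
        ∂(Measure.pi fun _ : Fin 2 => cmpM)) ∂(Measure.pi fun _ : Fin 2 => cmpM) := by
    rw [hμ, hE5, Measure.prod_apply hmE5]
    refine lintegral_congr fun u => ?_
    rw [Measure.prod_apply (hmE5.preimage measurable_prodMk_left)]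
    rfl
  -- inner integral for E6
  have hk6 : ∀ u : Fin 2 → ℝ, (∀ i, u i ∈ Set.Icc (0:ℝ) 1) →
      (∫⁻ v, (Measure.pi fun _ : Fin 2 × Fin 2 => cmpM)
          {w | ∀ i j : Fin 2, w (i, j) ≤ ρ * g (u i) * h (v j)}
        ∂(Measure.pi fun _ : Fin 2 => cmpM))
      = (ENNReal.ofReal (ρ ^ 4) * ENNReal.ofReal Ih ^ 2)
          * (ENNReal.ofReal (g (u 0) ^ 2) * ENNReal.ofReal (g (u 1) ^ 2)) := by
    intro u hu
    have hK0 : (0:ℝ) ≤ ρ ^ 2 * (g (u 0) * g (u 1)) :=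
      mul_nonneg (sq_nonneg ρ) (mul_nonneg (hg0 _) (hg0 _))
    have e1 : (∫⁻ v, (Measure.pi fun _ : Fin 2 × Fin 2 => cmpM)
        {w | ∀ i j : Fin 2, w (i, j) ≤ ρ * g (u i) * h (v j)}
          ∂(Measure.pi fun _ : Fin 2 => cmpM))
        = ∫⁻ v, (fun t => ENNReal.ofReal (ρ ^ 2 * (g (u 0) * g (u 1)))
              * ENNReal.ofReal (h t ^ 2)) (v 0)
            * (fun t => ENNReal.ofReal (ρ ^ 2 * (g (u 0) * g (u 1)))
              * ENNReal.ofReal (h t ^ 2)) (v 1) ∂(Measure.pi fun _ : Fin 2 => cmpM) := by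
      refine lintegral_congr_ae (cmp_ae_pi.mono fun v hv => ?_)
      beta_reduce
      rw [cmp_sec6 ρ g h u v (fun i j => hc0 _ _) (fun i j => hbound _ (hu i) _ (hv j))]
      rw [← ENNReal.ofReal_mul (hc0 _ _),
        ← ENNReal.ofReal_mul (mul_nonneg (hc0 _ _) (hc0 _ _)),
        ← ENNReal.ofReal_mul (mul_nonneg (mul_nonneg (hc0 _ _) (hc0 _ _)) (hc0 _ _)),
        ← ENNReal.ofReal_mul hK0, ← ENNReal.ofReal_mul hK0,
        ← ENNReal.ofReal_mul (mul_nonneg hK0 (sq_nonneg _))]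
      congr 1
      ring
    rw [e1, cmp_lintegral_pi_two _ _
        (((hhm.pow_const 2).ennreal_ofReal).const_mul _)
        (((hhm.pow_const 2).ennreal_ofReal).const_mul _),
      lintegral_const_mul _ ((hhm.pow_const 2).ennreal_ofReal), hHsq]
    rw [← ENNReal.ofReal_mul hK0,
      ← ENNReal.ofReal_mul (mul_nonneg hK0 hIh0),
      ← ENNReal.ofReal_pow hIh0,
      ← ENNReal.ofReal_mul (pow_nonneg hρ.le 4),
      ← ENNReal.ofReal_mul (sq_nonneg _),
      ← ENNReal.ofReal_mul (mul_nonneg (pow_nonneg hρ.le 4) (pow_nonneg hIh0 2))]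
    congr 1
    ring
  -- inner integral for E5
  have hk5 : ∀ u : Fin 2 → ℝ, (∀ i, u i ∈ Set.Icc (0:ℝ) 1) →
      (∫⁻ v, (Measure.pi fun _ : Fin 2 × Fin 2 => cmpM)
          {w | w (0, 0) ≤ ρ * g (u 0) * h (v 0) ∧ w (0, 1) ≤ ρ * g (u 0) * h (v 1)
            ∧ w (1, 1) ≤ ρ * g (u 1) * h (v 1)}
        ∂(Measure.pi fun _ : Fin 2 => cmpM))
      = (ENNReal.ofReal (ρ ^ 3) * ENNReal.ofReal Ih)
          * (ENNReal.ofReal (g (u 0) ^ 2) * ENNReal.ofReal (g (u 1))) := by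
    intro u hu
    have hK0 : (0:ℝ) ≤ ρ ^ 2 * (g (u 0) * g (u 1)) :=
      mul_nonneg (sq_nonneg ρ) (mul_nonneg (hg0 _) (hg0 _))
    have e1 : (∫⁻ v, (Measure.pi fun _ : Fin 2 × Fin 2 => cmpM)
        {w | w (0, 0) ≤ ρ * g (u 0) * h (v 0) ∧ w (0, 1) ≤ ρ * g (u 0) * h (v 1)
          ∧ w (1, 1) ≤ ρ * g (u 1) * h (v 1)}
          ∂(Measure.pi fun _ : Fin 2 => cmpM))
        = ∫⁻ v, (fun t => ENNReal.ofReal (ρ * g (u 0)) * ENNReal.ofReal (h t)) (v 0)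
            * (fun t => ENNReal.ofReal (ρ ^ 2 * (g (u 0) * g (u 1)))
              * ENNReal.ofReal (h t ^ 2)) (v 1) ∂(Measure.pi fun _ : Fin 2 => cmpM) := by
      refine lintegral_congr_ae (cmp_ae_pi.mono fun v hv => ?_)
      beta_reduce
      rw [cmp_sec5 _ _ _ (hc0 _ _) (hbound _ (hu 0) _ (hv 0)) (hc0 _ _)
        (hbound _ (hu 0) _ (hv 1)) (hc0 _ _) (hbound _ (hu 1) _ (hv 1))]
      rw [← ENNReal.ofReal_mul (hc0 _ _),
        ← ENNReal.ofReal_mul (mul_nonneg (hc0 _ _) (hc0 _ _)),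
        ← ENNReal.ofReal_mul (mul_nonneg hρ.le (hg0 _)),
        ← ENNReal.ofReal_mul hK0,
        ← ENNReal.ofReal_mul (mul_nonneg (mul_nonneg hρ.le (hg0 _)) (hh0 _))]
      congr 1
      ring
    rw [e1, cmp_lintegral_pi_two _ _
        ((hhm.ennreal_ofReal).const_mul _)
        (((hhm.pow_const 2).ennreal_ofReal).const_mul _),
      lintegral_const_mul _ (hhm.ennreal_ofReal),
      lintegral_const_mul _ ((hhm.pow_const 2).ennreal_ofReal), hH1, hHsq, mul_one]
    rw [← ENNReal.ofReal_mul hK0,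
      ← ENNReal.ofReal_mul (mul_nonneg hρ.le (hg0 _)),
      ← ENNReal.ofReal_mul (pow_nonneg hρ.le 3),
      ← ENNReal.ofReal_mul (sq_nonneg _),
      ← ENNReal.ofReal_mul (mul_nonneg (pow_nonneg hρ.le 3) hIh0)]
    congr 1
    ring
  -- total integrals
  have h6' : μ E6 = (ENNReal.ofReal (ρ ^ 4) * ENNReal.ofReal Ih ^ 2)
      * (ENNReal.ofReal Ig * ENNReal.ofReal Ig) := by
    rw [h6, lintegral_congr_ae (cmp_ae_pi.mono fun u hu => hk6 u hu),
      lintegral_const_mul _ (((((hgm.pow_const 2).ennreal_ofReal).comp'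
          (measurable_pi_apply 0)).mul (((hgm.pow_const 2).ennreal_ofReal).comp'
          (measurable_pi_apply 1))) : Measurable fun a => _ * _),
      cmp_lintegral_pi_two _ _ ((hgm.pow_const 2).ennreal_ofReal)
        ((hgm.pow_const 2).ennreal_ofReal), hGsq]
  have h5' : μ E5 = (ENNReal.ofReal (ρ ^ 3) * ENNReal.ofReal Ih)
      * (ENNReal.ofReal Ig * 1) := by
    rw [h5, lintegral_congr_ae (cmp_ae_pi.mono fun u hu => hk5 u hu),
      lintegral_const_mul _ (((((hgm.pow_const 2).ennreal_ofReal).comp'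
          (measurable_pi_apply 0)).mul ((hgm.ennreal_ofReal).comp'
          (measurable_pi_apply 1))) : Measurable fun a => _ * _),
      cmp_lintegral_pi_two _ _ ((hgm.pow_const 2).ennreal_ofReal)
        (hgm.ennreal_ofReal), hGsq, hG1]
  have hE6val : (μ E6).toReal = ρ ^ 4 * Ig ^ 2 * Ih ^ 2 := by
    rw [h6', ← ENNReal.ofReal_pow hIh0, ← ENNReal.ofReal_mul (by positivity),
      ← ENNReal.ofReal_mul hIg0, ← ENNReal.ofReal_mul (by positivity),
      ENNReal.toReal_ofReal (by positivity)]
    ring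
  have hE5val : (μ E5).toReal = ρ ^ 3 * Ig * Ih := by
    rw [h5', mul_one, ← ENNReal.ofReal_mul (by positivity),
      ← ENNReal.ofReal_mul (by positivity), ENNReal.toReal_ofReal (by positivity)]
    ring
  refine ⟨hE6val, ?_⟩
  rw [hE5val, hE6val]
  apply le_of_eq
  field_simp
end
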